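/- Let ζ ∈ ℝ and ω ∈ ℂ with 0 < Im ω < 1/2, and set t₀ := (1/(2π))·Log(e^{πζ} cosh(πω)/sinh(π(ζ+ω))) (principal logarithm). Then −1/2 < Im t₀ < 0 and t₀ satisfies Log(1 + e^{2π(t₀−ζ)}) − Log(1 − e^{2πt₀}) = 2πω − iπ; moreover, t₀ is the unique t ∈ ℂ with −1/2 < Im t < 0 satisfying Log(1 + e^{2π(t−ζ)}) − Log(1 − e^{2πt}) = 2πω − iπ. -/

import Mathlib

open MeasureTheory

noncomputable section

/-- The dilogarithm `Li₂(z) = -∫₀¹ Log(1 - t z) dt / t` (principal branch of `Log`). -/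
def Li2 (z : ℂ) : ℂ := -∫ t in (0:ℝ)..1, Complex.log (1 - (t:ℂ) * z) / (t:ℂ)

/-- Negative-index polylogarithms: `LiNeg m = Li_{-m}`, with `Li₀(w) = w/(1-w)` and
`Li_{-m}(w) = w ⬝ d/dw Li_{-m+1}(w)`. -/
def LiNeg : ℕ → ℂ → ℂ
  | 0 => fun w => w / (1 - w)
  | (m+1) => fun w => w * deriv (LiNeg m) w

/-- `LiIdx n = Li_{2-2n}`: the dilogarithm for `n = 0`, and `Li_{-(2n-2)}` for `n ≥ 1`. -/
def LiIdx (n : ℕ) : ℂ → ℂ := if n = 0 then Li2 else LiNeg (2*n - 2)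

/-- `L_b(z) = i ∫₀^∞ ( sin(2yz)/(2 sinh(y/b) sinh(by)) - z/y ) dy/y`. -/
def Lb (b : ℝ) (z : ℂ) : ℂ :=
  Complex.I * ∫ y in Set.Ioi (0:ℝ),
    (Complex.sin (2 * (y:ℂ) * z) / (2 * (Real.sinh (y / b) : ℂ) * (Real.sinh (b * y) : ℂ))
      - z / (y:ℂ)) / (y:ℂ)

/-- Ruijsenaars' hyperbolic gamma function `s_b(z) = exp(L_b(z))`. -/
def sb (b : ℝ) (z : ℂ) : ℂ := Complex.exp (Lb b z)

/-- `Q = b + b⁻¹` as a complex number. -/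
def Qb (b : ℝ) : ℂ := (b:ℂ) + (b:ℂ)⁻¹

/-- The function `𝓜(b, ζ', ω')`, the contour being the horizontal line `Im = -Q/4`. -/
def Mfun (b : ℝ) (ζ : ℝ) (ω : ℂ) : ℂ :=
  sb b ζ * ∫ x : ℝ,
    Complex.exp (Complex.I * (Real.pi:ℂ) * ((x:ℂ) - Complex.I * Qb b / 4)
        * ((ζ:ℂ) - Complex.I * Qb b / 2 + 2 * ω)) *
      sb b ((x:ℂ) - Complex.I * Qb b / 4 - (ζ:ℂ))
        / sb b ((x:ℂ) - Complex.I * Qb b / 4 + Complex.I * Qb b / 2)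

/-- The exponent `f_𝓜(ζ, ω)`. -/
def fM (ζ : ℝ) (ω : ℂ) : ℂ :=
  -(Li2 (-Complex.exp (2 * (Real.pi:ℂ) * (ζ:ℂ)))
    + Li2 (-(Complex.exp (-((Real.pi:ℂ) * (ζ:ℂ))) * Complex.cosh ((Real.pi:ℂ) * ω)
        / Complex.sinh ((Real.pi:ℂ) * ((ζ:ℂ) + ω))))
    - Li2 (Complex.exp ((Real.pi:ℂ) * (ζ:ℂ)) * Complex.cosh ((Real.pi:ℂ) * ω)
        / Complex.sinh ((Real.pi:ℂ) * ((ζ:ℂ) + ω))))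
    / (2 * (Real.pi:ℂ) * Complex.I)
  + Complex.I * (Real.pi:ℂ) * (ζ:ℂ)^2
  + Complex.I * (ω - Complex.I / 2) *
      Complex.log (Complex.exp ((Real.pi:ℂ) * (ζ:ℂ)) * Complex.cosh ((Real.pi:ℂ) * ω)
        / Complex.sinh ((Real.pi:ℂ) * ((ζ:ℂ) + ω)))
  + Complex.I * (Real.pi:ℂ) / 6

/-- The function `𝓠(b, σ', μ')`, the contour being the horizontal line `Im = -3Q/8`. -/
def Qfun (b : ℝ) (σ μ : ℝ) : ℂ :=
  Complex.exp (Complex.I * (Real.pi:ℂ) *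
      (1/6 + 7 * (Qb b)^2 / 24 - (μ:ℂ)^2/2 + Complex.I * (μ:ℂ) * Qb b - (σ:ℂ)^2)) * sb b μ *
  ∫ x : ℝ,
    Complex.exp (-(Complex.I * (Real.pi:ℂ) * ((x:ℂ) - 3 * Complex.I * Qb b / 8)^2)) *
    Complex.exp (2 * Complex.I * (Real.pi:ℂ) * ((x:ℂ) - 3 * Complex.I * Qb b / 8)
      * ((μ:ℂ) - Complex.I * Qb b / 2)) *
    sb b ((x:ℂ) - 3 * Complex.I * Qb b / 8 + (σ:ℂ)) *
    sb b ((x:ℂ) - 3 * Complex.I * Qb b / 8 - (σ:ℂ))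

/-- The exponent `f_𝓠(σ, μ)`. -/
def fQ (σ μ : ℝ) : ℂ :=
  -(Li2 (-Complex.exp (2 * (Real.pi:ℂ) * (μ:ℂ)))) / (2 * (Real.pi:ℂ) * Complex.I)
  - Li2 (Complex.exp (-(2 * (Real.pi:ℂ) * (σ:ℂ))) *
      ((Real.cosh (2*Real.pi*σ) : ℂ) + Complex.I *
        (Real.sqrt (Real.exp (2*Real.pi*μ) - Real.sinh (2*Real.pi*σ)^2) : ℂ)))
    / (2 * (Real.pi:ℂ) * Complex.I)
  - Li2 (Complex.exp (2 * (Real.pi:ℂ) * (σ:ℂ)) *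
      ((Real.cosh (2*Real.pi*σ) : ℂ) + Complex.I *
        (Real.sqrt (Real.exp (2*Real.pi*μ) - Real.sinh (2*Real.pi*σ)^2) : ℂ)))
    / (2 * (Real.pi:ℂ) * Complex.I)
  + (1/2 + Complex.I * (μ:ℂ)) *
      Complex.log (-(Real.cosh (2*Real.pi*σ) : ℂ) - Complex.I *
        (Real.sqrt (Real.exp (2*Real.pi*μ) - Real.sinh (2*Real.pi*σ)^2) : ℂ))
  - (Real.pi:ℂ) * (μ:ℂ) + 5 * (Real.pi:ℂ) * Complex.I / 12

/-- The phase function `f(t)` of the saddle point analysis of `𝓜`. -/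
def fMt (ζ : ℝ) (ω t : ℂ) : ℂ :=
  -(Li2 (-Complex.exp (2*(Real.pi:ℂ)*(ζ:ℂ)))
    + Li2 (-Complex.exp (2*(Real.pi:ℂ)*(t-(ζ:ℂ))))
    - Li2 (-Complex.exp (2*(Real.pi:ℂ)*(t+Complex.I/2)))) / (2*(Real.pi:ℂ)*Complex.I)
  + Complex.I*(Real.pi:ℂ)*(ζ:ℂ)^2 + 2*Complex.I*(Real.pi:ℂ)*t*ω + (Real.pi:ℂ)*t
  + Complex.I*(Real.pi:ℂ)/6

/-- The amplitude `g(t)` of the saddle point analysis of `𝓜`. -/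
def gM (t : ℂ) : ℂ :=
  Complex.exp ((Real.pi:ℂ)*t - Complex.log (1 - Complex.exp (2*(Real.pi:ℂ)*t)) / 2)

/-- The error term `E(τ, t)` from the semiclassical analysis of `𝓜`. -/
def Efun (ζ τ : ℝ) (t : ℂ) : ℂ :=
  Complex.I * (Li2 (Complex.exp (2*(Real.pi:ℂ)*t))
      - Li2 (Complex.exp (Complex.I*(Real.pi:ℂ)*(τ:ℂ) + 2*(Real.pi:ℂ)*t))) / (2*(Real.pi:ℂ)*(τ:ℂ))
  + Complex.log (1 - Complex.exp (2*(Real.pi:ℂ)*t)) / 2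
  + (Complex.I*(Real.pi:ℂ)*(τ:ℂ)/12) *
      (Complex.exp (2*(Real.pi:ℂ)*t + Complex.I*(Real.pi:ℂ)*(τ:ℂ))
          / (Complex.exp (2*(Real.pi:ℂ)*t + Complex.I*(Real.pi:ℂ)*(τ:ℂ)) - 1)
        - Complex.exp (2*(Real.pi:ℂ)*(ζ:ℂ)) / (Complex.exp (2*(Real.pi:ℂ)*(ζ:ℂ)) + 1)
        - Complex.exp (2*(Real.pi:ℂ)*t)
          / (Complex.exp (2*(Real.pi:ℂ)*(ζ:ℂ)) + Complex.exp (2*(Real.pi:ℂ)*t)) + 2)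

/-- The phase function `f(t)` of the saddle point analysis of `𝓠`. -/
def fQt (σ μ : ℝ) (t : ℂ) : ℂ :=
  -(Li2 (-Complex.exp (2*(Real.pi:ℂ)*(μ:ℂ)))
    + Li2 (-Complex.exp (2*(Real.pi:ℂ)*(t-(σ:ℂ))))
    + Li2 (-Complex.exp (2*(Real.pi:ℂ)*(t+(σ:ℂ))))) / (2*(Real.pi:ℂ)*Complex.I)
  + 2*Complex.I*(Real.pi:ℂ)*(μ:ℂ)*t + (Real.pi:ℂ)*(t-(μ:ℂ)) + 5*Complex.I*(Real.pi:ℂ)/12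

/-- The amplitude `g(t)` of the saddle point analysis of `𝓠`. -/
def gQ (μ : ℝ) (t : ℂ) : ℂ := Complex.exp ((Real.pi:ℂ)*(t-(μ:ℂ)))

end

lemma csinh_re (z : ℂ) : (Complex.sinh z).re = Real.sinh z.re * Real.cos z.im := by
  have h : Complex.sinh z * 2 = Complex.exp z - Complex.exp (-z) := by
    rw [Complex.sinh]; ring
  have h2 := congrArg Complex.re h
  simp only [Complex.mul_re, Complex.sub_re, Complex.exp_re, Complex.exp_im,
    Complex.neg_re, Complex.neg_im, Real.sin_neg, Real.cos_neg,
    Complex.re_ofNat, Complex.im_ofNat, Real.exp_neg] at h2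
  rw [Real.sinh_eq, Real.exp_neg]
  nlinarith [h2, Real.exp_pos z.re]

lemma csinh_im (z : ℂ) : (Complex.sinh z).im = Real.cosh z.re * Real.sin z.im := by
  have h : Complex.sinh z * 2 = Complex.exp z - Complex.exp (-z) := by
    rw [Complex.sinh]; ring
  have h2 := congrArg Complex.im h
  simp only [Complex.mul_im, Complex.sub_im, Complex.exp_re, Complex.exp_im,
    Complex.neg_re, Complex.neg_im, Real.sin_neg, Real.cos_neg,
    Complex.re_ofNat, Complex.im_ofNat, Real.exp_neg] at h2
  rw [Real.cosh_eq, Real.exp_neg]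
  nlinarith [h2, Real.exp_pos z.re]

lemma ccosh_re (z : ℂ) : (Complex.cosh z).re = Real.cosh z.re * Real.cos z.im := by
  have h : Complex.cosh z * 2 = Complex.exp z + Complex.exp (-z) := by
    rw [Complex.cosh]; ring
  have h2 := congrArg Complex.re h
  simp only [Complex.mul_re, Complex.add_re, Complex.exp_re, Complex.exp_im,
    Complex.neg_re, Complex.neg_im, Real.sin_neg, Real.cos_neg,
    Complex.re_ofNat, Complex.im_ofNat, Real.exp_neg] at h2
  rw [Real.cosh_eq, Real.exp_neg]
  nlinarith [h2, Real.exp_pos z.re]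

lemma ccosh_im (z : ℂ) : (Complex.cosh z).im = Real.sinh z.re * Real.sin z.im := by
  have h : Complex.cosh z * 2 = Complex.exp z + Complex.exp (-z) := by
    rw [Complex.cosh]; ring
  have h2 := congrArg Complex.im h
  simp only [Complex.mul_im, Complex.add_im, Complex.exp_re, Complex.exp_im,
    Complex.neg_re, Complex.neg_im, Real.sin_neg, Real.cos_neg,
    Complex.re_ofNat, Complex.im_ofNat, Real.exp_neg] at h2
  rw [Real.sinh_eq, Real.exp_neg]
  nlinarith [h2, Real.exp_pos z.re]

set_option maxHeartbeats 2000000 in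
theorem M_saddle_point (ζ : ℝ) (ω : ℂ) (hω1 : 0 < ω.im) (hω2 : ω.im < 1/2)
    (t₀ : ℂ)
    (ht₀ : t₀ = (1/(2*(Real.pi:ℂ))) *
      Complex.log (Complex.exp ((Real.pi:ℂ)*(ζ:ℂ)) * Complex.cosh ((Real.pi:ℂ)*ω)
        / Complex.sinh ((Real.pi:ℂ)*((ζ:ℂ)+ω)))) :
    (-1/2 < t₀.im ∧ t₀.im < 0) ∧
    (Complex.log (1 + Complex.exp (2*(Real.pi:ℂ)*(t₀-(ζ:ℂ))))
      - Complex.log (1 - Complex.exp (2*(Real.pi:ℂ)*t₀))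
      = 2*(Real.pi:ℂ)*ω - Complex.I*(Real.pi:ℂ)) ∧
    (∀ t : ℂ, -1/2 < t.im → t.im < 0 →
      Complex.log (1 + Complex.exp (2*(Real.pi:ℂ)*(t-(ζ:ℂ))))
        - Complex.log (1 - Complex.exp (2*(Real.pi:ℂ)*t))
        = 2*(Real.pi:ℂ)*ω - Complex.I*(Real.pi:ℂ) → t = t₀) := by
  have hπ : (0:ℝ) < Real.pi := Real.pi_pos
  set a : ℂ := (Real.pi:ℂ)*(ζ:ℂ) with ha
  set b : ℂ := (Real.pi:ℂ)*ω with hb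
  have hab : (Real.pi:ℂ)*((ζ:ℂ)+ω) = a + b := by rw [ha, hb]; ring
  rw [hab] at ht₀
  set S : ℂ := Complex.sinh (a+b) with hS
  set W : ℂ := Complex.exp a * Complex.cosh b / S with hW
  have haim : a.im = 0 := by simp [ha]
  have hare : a.re = Real.pi * ζ := by simp [ha]
  have hbim : b.im = Real.pi * ω.im := by simp [hb]
  have hv1 : 0 < b.im := by rw [hbim]; positivity
  have hv2 : b.im < Real.pi/2 := by rw [hbim]; nlinarith
  -- basic nonvanishing
  have hSim : 0 < S.im := by
    rw [hS, csinh_im]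
    have h1 : (a+b).im = b.im := by simp [Complex.add_im, haim]
    have h2 : 0 < Real.sin ((a+b).im) := by
      rw [h1]; exact Real.sin_pos_of_pos_of_lt_pi hv1 (by linarith)
    positivity
  have hS0 : S ≠ 0 := by intro h; rw [h] at hSim; simp at hSim
  have hcoshb0 : Complex.cosh b ≠ 0 := by
    intro h
    have : (Complex.cosh b).re = 0 := by rw [h]; simp
    rw [ccosh_re] at this
    have h1 : 0 < Real.cos b.im := Real.cos_pos_of_mem_Ioo ⟨by linarith, hv2⟩
    nlinarith [Real.cosh_pos b.re]
  have hW0 : W ≠ 0 := by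
    rw [hW]
    exact div_ne_zero (mul_ne_zero (Complex.exp_ne_zero a) hcoshb0) hS0
  -- imaginary part of W is negative
  have hWim : W.im < 0 := by
    rw [hW, Complex.div_im]
    have hnsq : 0 < Complex.normSq S := Complex.normSq_pos.2 hS0
    have hkey : (Complex.exp a * Complex.cosh b).im * S.re
        - (Complex.exp a * Complex.cosh b).re * S.im
        = -(Real.exp a.re * Real.sin b.im * Real.cos b.im * Real.cosh a.re) := by
      rw [Complex.mul_im, Complex.mul_re, Complex.exp_re, Complex.exp_im,
        ccosh_re, ccosh_im, hS, csinh_re, csinh_im, haim]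
      have h1 : (a+b).im = b.im := by simp [Complex.add_im, haim]
      have h2 : (a+b).re = a.re + b.re := by simp [Complex.add_re]
      rw [h1, h2, Real.sin_zero, Real.cos_zero]
      have h3 : Real.cosh (a.re + b.re) * Real.cosh b.re
          - Real.sinh (a.re + b.re) * Real.sinh b.re = Real.cosh a.re := by
        rw [← Real.cosh_sub]; ring_nf
      linear_combination (-(Real.exp a.re * Real.sin b.im * Real.cos b.im)) * h3
    have hpos : 0 < Real.exp a.re * Real.sin b.im * Real.cos b.im * Real.cosh a.re := by
      have h1 : 0 < Real.sin b.im := Real.sin_pos_of_pos_of_lt_pi hv1 (by linarith)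
      have h2 : 0 < Real.cos b.im := Real.cos_pos_of_mem_Ioo ⟨by linarith, hv2⟩
      positivity
    rw [div_sub_div_same]
    apply div_neg_of_neg_of_pos _ hnsq
    rw [hkey]; linarith
  -- part 1
  have hargW1 : -Real.pi < W.arg := Complex.neg_pi_lt_arg W
  have hargW2 : W.arg < 0 := Complex.arg_neg_iff.2 hWim
  have ht₀im : t₀.im = (1/(2*Real.pi)) * W.arg := by
    rw [ht₀, show (1/(2*(Real.pi:ℂ))) = (((1/(2*Real.pi): ℝ)):ℂ) by push_cast; ring]
    simp [Complex.mul_im, Complex.log_im]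
  have h12 : (1/(2*Real.pi)) * Real.pi = 1/2 := by field_simp
  have hp1a : -1/2 < t₀.im := by
    rw [ht₀im]
    nlinarith [mul_pos (by positivity : (0:ℝ) < 1/(2*Real.pi)) (by linarith : (0:ℝ) < W.arg + Real.pi)]
  have hp1b : t₀.im < 0 := by
    rw [ht₀im]
    nlinarith [mul_pos (by positivity : (0:ℝ) < 1/(2*Real.pi)) (by linarith : (0:ℝ) < -W.arg)]
  -- the quantity C = cosh a / S and its log
  have hca : Complex.cosh a = ((Real.cosh (Real.pi*ζ) : ℝ):ℂ) := by
    rw [show a = ((Real.pi*ζ : ℝ):ℂ) by rw [ha]; push_cast; ring, Complex.ofReal_cosh]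
  have hcosha0 : Complex.cosh a ≠ 0 := by
    rw [hca]; exact_mod_cast (Real.cosh_pos (Real.pi*ζ)).ne'
  set C : ℂ := Complex.cosh a / S with hC
  have hC0 : C ≠ 0 := div_ne_zero hcosha0 hS0
  have hCim : C.im < 0 := by
    rw [hC, Complex.div_im, hca]
    simp only [Complex.ofReal_re, Complex.ofReal_im]
    have hnsq : 0 < Complex.normSq S := Complex.normSq_pos.2 hS0
    have hcp : 0 < Real.cosh (Real.pi*ζ) := Real.cosh_pos _
    have h1 : 0 < Real.cosh (Real.pi*ζ) * S.im / Complex.normSq S := by positivity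
    have h2 : (0:ℝ) * S.re / Complex.normSq S = 0 := by simp
    linarith
  have hargC1 : -Real.pi < C.arg := Complex.neg_pi_lt_arg C
  have hargC2 : C.arg < 0 := Complex.arg_neg_iff.2 hCim
  -- exponential of 2π t₀
  have h2pi0 : (2*(Real.pi:ℂ)) ≠ 0 := by
    simp only [ne_eq, mul_eq_zero, Complex.ofReal_eq_zero]
    push_neg; exact ⟨two_ne_zero, hπ.ne'⟩
  have hlogW : 2*(Real.pi:ℂ)*t₀ = Complex.log W := by
    rw [ht₀]; field_simp
  have hE : Complex.exp (2*(Real.pi:ℂ)*t₀) = W := by rw [hlogW, Complex.exp_log hW0]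
  -- algebraic identities
  have h1 := Complex.exp_ne_zero a
  have h2 := Complex.exp_ne_zero b
  have id1 : S + Complex.exp (-a) * Complex.cosh b = Complex.exp b * Complex.cosh a := by
    rw [hS, Complex.sinh, Complex.cosh, Complex.cosh]
    simp only [show -(a+b) = -a + -b from by ring, Complex.exp_add, Complex.exp_neg]
    field_simp
    ring
  have id2 : S - Complex.exp a * Complex.cosh b = -(Complex.exp (-b) * Complex.cosh a) := by
    rw [hS, Complex.sinh, Complex.cosh, Complex.cosh]
    simp only [show -(a+b) = -a + -b from by ring, Complex.exp_add, Complex.exp_neg]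
    field_simp
    ring
  have id3 : W * (Complex.exp (2*b) - Complex.exp (-(2*a))) = 1 + Complex.exp (2*b) := by
    rw [hW]
    rw [div_mul_eq_mul_div, div_eq_iff hS0, hS, Complex.sinh, Complex.cosh]
    simp only [show -(a+b) = -a + -b from by ring, show (2:ℂ)*b = b + b from by ring,
      show -(2*a) = -a + -a from by ring, Complex.exp_add, Complex.exp_neg]
    field_simp
    ring
  have hprod : Complex.exp a * Complex.exp (-(2*a)) = Complex.exp (-a) := by
    rw [← Complex.exp_add]; congr 1; ring
  have hWexp : W * Complex.exp (-(2*a)) = Complex.exp (-a) * Complex.cosh b / S := by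
    rw [hW, show Complex.exp a * Complex.cosh b / S * Complex.exp (-(2*a))
      = (Complex.exp a * Complex.exp (-(2*a))) * Complex.cosh b / S from by ring, hprod]
  have E1 : 1 + W * Complex.exp (-(2*a)) = Complex.exp b * C := by
    rw [hWexp, hC]
    field_simp
    linear_combination id1
  have E2 : 1 - W = -(Complex.exp (-b) * C) := by
    rw [hW, hC]
    field_simp
    linear_combination id2
  -- part 2
  have hA : (1:ℂ) + Complex.exp (2*(Real.pi:ℂ)*(t₀-(ζ:ℂ))) = Complex.exp (b + Complex.log C) := by
    have hsplit : Complex.exp (2*(Real.pi:ℂ)*(t₀-(ζ:ℂ)))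
        = Complex.exp (2*(Real.pi:ℂ)*t₀) * Complex.exp (-(2*a)) := by
      rw [← Complex.exp_add]; congr 1; rw [ha]; ring
    rw [hsplit, hE, Complex.exp_add, Complex.exp_log hC0, E1]
  have hLA : Complex.log (1 + Complex.exp (2*(Real.pi:ℂ)*(t₀-(ζ:ℂ)))) = b + Complex.log C := by
    rw [hA, Complex.log_exp]
    · simp only [Complex.add_im, Complex.log_im]; linarith
    · simp only [Complex.add_im, Complex.log_im]; linarith
  have hB : (1:ℂ) - Complex.exp (2*(Real.pi:ℂ)*t₀)
      = Complex.exp (-b + Complex.log C + (Real.pi:ℂ)*Complex.I) := by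
    rw [hE, Complex.exp_add, Complex.exp_add, Complex.exp_log hC0, Complex.exp_pi_mul_I, E2]
    ring
  have hLB : Complex.log (1 - Complex.exp (2*(Real.pi:ℂ)*t₀))
      = -b + Complex.log C + (Real.pi:ℂ)*Complex.I := by
    rw [hB, Complex.log_exp]
    · simp only [Complex.add_im, Complex.neg_im, Complex.log_im, Complex.mul_im,
        Complex.I_im, Complex.I_re, Complex.ofReal_re, Complex.ofReal_im]
      linarith
    · simp only [Complex.add_im, Complex.neg_im, Complex.log_im, Complex.mul_im,
        Complex.I_im, Complex.I_re, Complex.ofReal_re, Complex.ofReal_im]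
      linarith
  have hpart2 : Complex.log (1 + Complex.exp (2*(Real.pi:ℂ)*(t₀-(ζ:ℂ))))
      - Complex.log (1 - Complex.exp (2*(Real.pi:ℂ)*t₀))
      = 2*(Real.pi:ℂ)*ω - Complex.I*(Real.pi:ℂ) := by
    rw [hLA, hLB, hb]; ring
  refine ⟨⟨hp1a, hp1b⟩, hpart2, ?_⟩
  intro t h1t h2t heq
  set A : ℂ := 1 + Complex.exp (2*(Real.pi:ℂ)*(t-(ζ:ℂ))) with hAdef
  set B : ℂ := 1 - Complex.exp (2*(Real.pi:ℂ)*t) with hBdef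
  have hA0 : A ≠ 0 := by
    intro h
    rw [hAdef] at h
    have hm1 : Complex.exp (2*(Real.pi:ℂ)*(t-(ζ:ℂ))) = -1 := by linear_combination h
    have hsq : Complex.exp (2*(2*(Real.pi:ℂ)*(t-(ζ:ℂ)))) = 1 := by
      rw [show (2:ℂ)*(2*(Real.pi:ℂ)*(t-(ζ:ℂ)))
        = 2*(Real.pi:ℂ)*(t-(ζ:ℂ)) + 2*(Real.pi:ℂ)*(t-(ζ:ℂ)) from by ring,
        Complex.exp_add, hm1]
      ring
    obtain ⟨n, hn⟩ := Complex.exp_eq_one_iff.1 hsq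
    have hts : (2:ℂ) * (t - (ζ:ℂ)) = (n:ℂ) * Complex.I := by
      apply mul_left_cancel₀ h2pi0
      linear_combination hn
    have him := congrArg Complex.im hts
    simp only [Complex.mul_im, Complex.mul_re, Complex.sub_im, Complex.sub_re,
      Complex.ofReal_im, Complex.ofReal_re, Complex.intCast_re, Complex.intCast_im,
      Complex.I_re, Complex.I_im, Complex.re_ofNat, Complex.im_ofNat, mul_one, mul_zero,
      zero_mul, one_mul, sub_zero, add_zero, zero_add] at him
    have l1 : (-1:ℤ) < n := by
      have : (-1:ℝ) < (n:ℝ) := by nlinarith [h1t, him]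
      exact_mod_cast this
    have l2 : n < 0 := by
      have : ((n:ℝ)) < 0 := by nlinarith [h2t, him]
      exact_mod_cast this
    omega
  have hB0 : B ≠ 0 := by
    intro h
    rw [hBdef] at h
    have hm1 : Complex.exp (2*(Real.pi:ℂ)*t) = 1 := by linear_combination -h
    obtain ⟨n, hn⟩ := Complex.exp_eq_one_iff.1 hm1
    have hts : t = (n:ℂ) * Complex.I := by
      apply mul_left_cancel₀ h2pi0
      linear_combination hn
    have him := congrArg Complex.im hts
    simp only [Complex.mul_im, Complex.mul_re, Complex.intCast_re, Complex.intCast_im,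
      Complex.I_re, Complex.I_im, mul_one, mul_zero, zero_mul, one_mul, sub_zero,
      add_zero, zero_add] at him
    have l1 : (-1:ℤ) < n := by
      have : (-1:ℝ) < (n:ℝ) := by nlinarith [h1t, him]
      exact_mod_cast this
    have l2 : n < 0 := by
      have : ((n:ℝ)) < 0 := by nlinarith [h2t, him]
      exact_mod_cast this
    omega
  have hlogA : Complex.log A = Complex.log B + (2*(Real.pi:ℂ)*ω - Complex.I*(Real.pi:ℂ)) := by
    linear_combination heq
  have hexpconst : Complex.exp (2*(Real.pi:ℂ)*ω - Complex.I*(Real.pi:ℂ))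
      = -Complex.exp (2*b) := by
    rw [Complex.exp_sub, show Complex.I*(Real.pi:ℂ) = (Real.pi:ℂ)*Complex.I from by ring,
      Complex.exp_pi_mul_I, show (2:ℂ)*(Real.pi:ℂ)*ω = 2*b from by rw [hb]; ring]
    field_simp
  have hABrel : A = B * (-Complex.exp (2*b)) := by
    calc A = Complex.exp (Complex.log A) := (Complex.exp_log hA0).symm
    _ = Complex.exp (Complex.log B) * Complex.exp (2*(Real.pi:ℂ)*ω - Complex.I*(Real.pi:ℂ)) := by
        rw [← Complex.exp_add, hlogA]
    _ = B * (-Complex.exp (2*b)) := by rw [Complex.exp_log hB0, hexpconst]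
  have hsplit : Complex.exp (2*(Real.pi:ℂ)*(t-(ζ:ℂ)))
      = Complex.exp (2*(Real.pi:ℂ)*t) * Complex.exp (-(2*a)) := by
    rw [← Complex.exp_add]; congr 1; rw [ha]; ring
  have hFD : Complex.exp (2*(Real.pi:ℂ)*t) * (Complex.exp (2*b) - Complex.exp (-(2*a)))
      = 1 + Complex.exp (2*b) := by
    rw [hAdef, hBdef, hsplit] at hABrel
    linear_combination -hABrel
  have hD0 : Complex.exp (2*b) - Complex.exp (-(2*a)) ≠ 0 := by
    intro h
    rw [sub_eq_zero] at h
    have h' : Complex.exp (2*b + 2*a) = 1 := by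
      rw [Complex.exp_add, h, ← Complex.exp_add]
      simp
    obtain ⟨n, hn⟩ := Complex.exp_eq_one_iff.1 h'
    have him := congrArg Complex.im hn
    simp only [Complex.add_im, Complex.mul_im, Complex.mul_re, Complex.intCast_re,
      Complex.intCast_im, Complex.I_re, Complex.I_im, Complex.ofReal_im, Complex.ofReal_re,
      Complex.re_ofNat, Complex.im_ofNat] at him
    rw [haim] at him
    have l1 : (0:ℤ) < n := by
      have : (0:ℝ) < (n:ℝ) := by nlinarith [him, hv1, hv2, hπ]
      exact_mod_cast this
    have l2 : n < 1 := by
      have : ((n:ℝ)) < 1 := by nlinarith [him, hv1, hv2, hπ]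
      exact_mod_cast this
    omega
  have hFW : Complex.exp (2*(Real.pi:ℂ)*t) = W :=
    mul_right_cancel₀ hD0 (by rw [hFD, ← id3])
  have hEE : Complex.exp (2*(Real.pi:ℂ)*t) = Complex.exp (2*(Real.pi:ℂ)*t₀) := by
    rw [hFW, hE]
  obtain ⟨n, hn⟩ := Complex.exp_eq_exp_iff_exists_int.1 hEE
  have ht' : t = t₀ + (n:ℂ)*Complex.I := by
    apply mul_left_cancel₀ h2pi0
    linear_combination hn
  have him := congrArg Complex.im ht'
  simp only [Complex.add_im, Complex.mul_im, Complex.mul_re, Complex.intCast_re,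
    Complex.intCast_im, Complex.I_re, Complex.I_im, mul_one, mul_zero, zero_mul, one_mul, sub_zero,
      add_zero, zero_add] at him
  have hn0 : n = 0 := by
    have l1 : (-1:ℤ) < n := by
      have : (-1:ℝ) < (n:ℝ) := by nlinarith [him, h1t, h2t, hp1a, hp1b]
      exact_mod_cast this
    have l2 : n < 1 := by
      have : ((n:ℝ)) < 1 := by nlinarith [him, h1t, h2t, hp1a, hp1b]
      exact_mod_cast this
    omega
  rw [ht', hn0]
  simp
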